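/- With the notation of the previous setting (J a lowering operator of order k, {P_n} an MPS with dual sequence {u_n}, P̃_n = (λ_{n+k}^{[k]})^{−1}J(P_{n+k})), we have P̃_n = P_n for all n ≥ 0 if and only if ᵗJ(u_n) = λ_{n+k}^{[k]} u_{n+k} for all n ≥ 0. -/

import Mathlib

open Polynomial

noncomputable def pmulForm (w : Polynomial ℂ) (u : Module.Dual ℂ (Polynomial ℂ)) :
    Module.Dual ℂ (Polynomial ℂ) :=
  u ∘ₗ (LinearMap.mulLeft ℂ w)

noncomputable def formD (u : Module.Dual ℂ (Polynomial ℂ)) :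
    Module.Dual ℂ (Polynomial ℂ) :=
  -(u ∘ₗ (Polynomial.derivative : Polynomial ℂ →ₗ[ℂ] Polynomial ℂ))

theorem stmt12 (k : ℕ) (a : ℕ → Polynomial ℂ)
    (J : Polynomial ℂ → Polynomial ℂ)
    (hJ : ∀ p, J p = ∑ ν ∈ Finset.range (p.natDegree + 1),
        ((Nat.factorial ν : ℂ))⁻¹ • (a ν * Polynomial.derivative^[ν] p))
    (ha : ∀ ν < k, a ν = 0)
    (hadeg : ∀ ν, k ≤ ν → (a ν).degree ≤ ((ν - k : ℕ) : ℕ))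
    (lam : ℕ → ℂ)
    (hlam : ∀ n, lam n = ∑ ν ∈ Finset.range (n + 1),
        ((n + k).choose (n + k - ν) : ℂ) * (a (n + k - ν)).coeff (n - ν))
    (hlamne : ∀ n, lam n ≠ 0)
    (P : ℕ → Polynomial ℂ) (hmonic : ∀ n, (P n).Monic) (hdeg : ∀ n, (P n).natDegree = n)
    (u : ℕ → Module.Dual ℂ (Polynomial ℂ))
    (hdual : ∀ n m, u n (P m) = if n = m then 1 else 0)
    (Pt : ℕ → Polynomial ℂ) (hPt : ∀ n, Pt n = (lam n)⁻¹ • J (P (n + k))) :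
    (∀ n, Pt n = P n) ↔
      (∀ n, ∀ f : Polynomial ℂ, u n (J f) = lam n * u (n + k) f) := by
  -- P 0 = 1
  have P0 : P 0 = 1 := ((hmonic 0).natDegree_eq_zero).mp (hdeg 0)
  -- J extended to any larger range
  have Jext : ∀ (p : Polynomial ℂ) (N : ℕ), p.natDegree < N →
      J p = ∑ ν ∈ Finset.range N,
        ((Nat.factorial ν : ℂ))⁻¹ • (a ν * Polynomial.derivative^[ν] p) := by
    intro p N hN
    rw [hJ p]
    apply Finset.sum_subset
    · intro x hx
      simp only [Finset.mem_range] at hx ⊢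
      omega
    · intro x _ hx
      simp only [Finset.mem_range, not_lt] at hx
      rw [Polynomial.iterate_derivative_eq_zero (by omega), mul_zero, smul_zero]
  -- J is "linear" on finite combinations of the P m
  have Jsum : ∀ (d : ℕ) (c : ℕ → ℂ),
      J (∑ m ∈ Finset.range (d + 1), c m • P m)
        = ∑ m ∈ Finset.range (d + 1), c m • J (P m) := by
    intro d c
    have hdegsum : (∑ m ∈ Finset.range (d + 1), c m • P m).natDegree < d + 1 := by
      apply Nat.lt_succ_of_le
      apply Polynomial.natDegree_sum_le_of_forall_le
      intro m hm
      refine le_trans (Polynomial.natDegree_smul_le _ _) ?_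
      rw [hdeg m]
      exact Nat.le_of_lt_succ (Finset.mem_range.mp hm)
    rw [Jext _ (d + 1) hdegsum]
    have step : ∀ ν, Polynomial.derivative^[ν] (∑ m ∈ Finset.range (d + 1), c m • P m)
        = ∑ m ∈ Finset.range (d + 1), c m • Polynomial.derivative^[ν] (P m) := by
      intro ν
      rw [Polynomial.iterate_derivative_sum]
      exact Finset.sum_congr rfl fun m _ => Polynomial.iterate_derivative_smul _ _ _
    simp only [step, Finset.mul_sum, Finset.smul_sum]
    rw [Finset.sum_comm]
    refine Finset.sum_congr rfl fun m hm => ?_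
    rw [Jext (P m) (d + 1) (by rw [hdeg]; exact Finset.mem_range.mp hm), Finset.smul_sum]
    refine Finset.sum_congr rfl fun ν _ => ?_
    rw [smul_comm, mul_smul_comm]
  -- spanning
  have repr : ∀ (d : ℕ) (q : Polynomial ℂ), q.natDegree ≤ d → ∃ c : ℕ → ℂ,
      q = ∑ m ∈ Finset.range (d + 1), c m • P m := by
    intro d
    induction d with
    | zero =>
      intro q hq
      refine ⟨fun _ => q.coeff 0, ?_⟩
      simp [P0, Polynomial.smul_C]
      conv_lhs => rw [Polynomial.eq_C_of_natDegree_le_zero hq]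
      simp [Algebra.algebraMap_self, Polynomial.smul_eq_C_mul]
    | succ d ih =>
      intro q hq
      have hdq : (q - q.coeff (d + 1) • P (d + 1)).natDegree ≤ d := by
        rw [Polynomial.natDegree_le_iff_coeff_eq_zero]
        intro m hm
        rcases eq_or_lt_of_le (Nat.succ_le_of_lt hm) with h | h
        · have hlead : (P (d + 1)).coeff (d + 1) = 1 := by
            have := (hmonic (d + 1)).coeff_natDegree
            rwa [hdeg] at this
          rw [Polynomial.coeff_sub, Polynomial.coeff_smul, ← h, hlead]
          simp
        · have h1 : q.coeff m = 0 :=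
            Polynomial.coeff_eq_zero_of_natDegree_lt (by omega)
          have h2 : (P (d + 1)).coeff m = 0 :=
            Polynomial.coeff_eq_zero_of_natDegree_lt (by rw [hdeg]; omega)
          rw [Polynomial.coeff_sub, Polynomial.coeff_smul, h1, h2]
          simp
      obtain ⟨c, hc⟩ := ih (q - q.coeff (d + 1) • P (d + 1)) hdq
      refine ⟨fun m => if m = d + 1 then q.coeff (d + 1) else c m, ?_⟩
      rw [Finset.sum_range_succ]
      simp only
      rw [if_pos trivial]
      have : ∑ m ∈ Finset.range (d + 1), (if m = d + 1 then q.coeff (d + 1) else c m) • P m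
          = ∑ m ∈ Finset.range (d + 1), c m • P m := by
        refine Finset.sum_congr rfl fun m hm => ?_
        rw [if_neg (by have := Finset.mem_range.mp hm; omega)]
      rw [this, ← hc]
      abel
  -- injectivity
  have inj : ∀ q : Polynomial ℂ, (∀ m, u m q = 0) → q = 0 := by
    intro q hq
    obtain ⟨c, hc⟩ := repr q.natDegree q le_rfl
    have hcz : ∀ j ∈ Finset.range (q.natDegree + 1), c j = 0 := by
      intro j hj
      have := hq j
      rw [hc, map_sum] at this
      simpa [hdual, Finset.sum_ite_eq, hj] using this
    rw [hc]
    exact Finset.sum_eq_zero fun m hm => by rw [hcz m hm, zero_smul]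
  constructor
  · -- forward
    intro h n f
    have hJP : ∀ m, J (P m) = if k ≤ m then lam (m - k) • P (m - k) else 0 := by
      intro m
      by_cases hmk : k ≤ m
      · rw [if_pos hmk]
        have := h (m - k)
        rw [hPt] at this
        have hmk' : m - k + k = m := Nat.sub_add_cancel hmk
        rw [hmk'] at this
        rw [← this, smul_smul, mul_inv_cancel₀ (hlamne (m - k)), one_smul]
      · rw [if_neg hmk]
        rw [hJ, hdeg]
        refine Finset.sum_eq_zero fun ν hν => ?_
        have : ν < k := by have := Finset.mem_range.mp hν; omega
        rw [ha ν this, zero_mul, smul_zero]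
    obtain ⟨c, hc⟩ := repr (f.natDegree + n + k) f (by omega)
    set d := f.natDegree + n + k with hd
    have huf : u (n + k) f = c (n + k) := by
      rw [hc, map_sum]
      have hmem : n + k ∈ Finset.range (d + 1) := Finset.mem_range.mpr (by omega)
      simp [hdual, Finset.sum_ite_eq, hmem]
    rw [hc, Jsum, map_sum, ← hc, huf]
    have : ∀ m ∈ Finset.range (d + 1),
        u n (c m • J (P m)) = if m = n + k then lam n * c (n + k) else 0 := by
      intro m _
      rw [map_smul, hJP m]
      by_cases hm : m = n + k
      · subst hm
        rw [if_pos rfl, if_pos (by omega)]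
        simp only [Nat.add_sub_cancel, map_smul, hdual]
        simp [mul_comm]
      · rw [if_neg hm]
        by_cases hmk : k ≤ m
        · rw [if_pos hmk]
          rw [map_smul, hdual, if_neg (show ¬ n = m - k by omega)]
          simp
        · rw [if_neg hmk]
          simp
    rw [Finset.sum_congr rfl this, Finset.sum_ite_eq' (Finset.range (d + 1)) (n + k)]
    rw [if_pos (Finset.mem_range.mpr (by omega))]
  · -- backward
    intro h n
    rw [hPt]
    have key : ∀ m, u m ((lam n)⁻¹ • J (P (n + k)) - P n) = 0 := by
      intro m
      rw [map_sub, map_smul, h m (P (n + k)), hdual, hdual]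
      by_cases hmn : m = n
      · rw [hmn, if_pos rfl, if_pos rfl]
        simp [smul_eq_mul, inv_mul_cancel₀ (hlamne n)]
      · rw [if_neg (by omega), if_neg hmn]
        simp
    exact sub_eq_zero.mp (inj _ key)
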